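/- Let n ≥ 2 and let f ∈ F, f ≠ 0, be given by an admissible linear system 𝒜 = (e₁, A, v) of dimension n whose left family and right family are each K-linearly independent, where A has the block form A = [[1, b', b], [0, B, b''], [0, 0, 1]] (with B ∈ F^{(n−2)×(n−2)}, b' ∈ F^{1×(n−2)}, b ∈ F, b'' ∈ F^{(n−2)×1}) and v = (0,…,0,λ)ᵀ with λ ∈ K. Then the (n−1) × (n−1) matrix A' = [[−λ Σ b'', −Σ B Σ], [−λ b, −b' Σ]] (Σ = Σ_{n−2}) is invertible over F, 𝒜' = (e₁, A', e_{n−1}) is an admissible linear system of dimension n−1 for f⁻¹, the left family and the right family of 𝒜' are each K-linearly independent, and 1 ∉ L(𝒜') and 1 ∉ R(𝒜'). -/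

import Mathlib

open Matrix
set_option maxHeartbeats 2000000

/-- The permutation matrix `Σ_m` reversing the order of rows/columns. -/
def revMat (F : Type*) [Semiring F] (m : ℕ) : Matrix (Fin m) (Fin m) F :=
  Matrix.of fun p q => if q = p.rev then 1 else 0

lemma revMat_mul_apply {F : Type*} [Semiring F] {m : ℕ} {n : Type*} (M : Matrix (Fin m) n F)
    (i : Fin m) (j : n) : (revMat F m * M) i j = M i.rev j := by
  simp [revMat, Matrix.mul_apply]

lemma mul_revMat_apply {F : Type*} [Semiring F] {m : ℕ} {n : Type*} (M : Matrix n (Fin m) F)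
    (i : n) (j : Fin m) : (M * revMat F m) i j = M i j.rev := by
  have h : ∀ x : Fin m, (j = Fin.rev x) ↔ (x = Fin.rev j) :=
    fun x => by constructor <;> (rintro rfl; simp)
  simp [revMat, Matrix.mul_apply, h]

lemma revMat_mul_revMat {F : Type*} [Semiring F] (m : ℕ) :
    revMat F m * revMat F m = 1 := by
  ext i j
  rw [revMat_mul_apply]
  simp [revMat, Matrix.one_apply, eq_comm, Fin.rev_eq_iff]

lemma one_dim_mul {F : Type*} [Semiring F] {n : Type*} (N : Matrix (Fin 1) (Fin 1) F)
    (M : Matrix (Fin 1) n F) : N * M = N 0 0 • M := by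
  ext i j
  have : i = 0 := Subsingleton.elim i 0
  subst this
  simp [Matrix.mul_apply]

/-- Inverse of type (1,1): if `f ≠ 0` has a minimal ALS of dimension `n = m + 2` with
system matrix `[[1, b', b], [0, B, b''], [0, 0, 1]]` and right-hand side `(0,…,0,λ)ᵀ`,
then `A' = [[−λ Σ b'', −Σ B Σ], [−λ b, −b' Σ]]` gives a minimal ALS `(e₁, A', e_{n−1})`
of dimension `n − 1` for `f⁻¹`, with `1 ∉ L(𝒜')` and `1 ∉ R(𝒜')`. -/
theorem inverse_type_one_one {K F : Type*} [Field K] [DivisionRing F] [Algebra K F]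
    {m : ℕ}
    (f : F) (hne : f ≠ 0)
    (b : F) (b' : Matrix (Fin 1) (Fin m) F) (B : Matrix (Fin m) (Fin m) F)
    (b'' : Matrix (Fin m) (Fin 1) F) (lam : K)
    (A : Matrix (Fin 1 ⊕ (Fin m ⊕ Fin 1)) (Fin 1 ⊕ (Fin m ⊕ Fin 1)) F)
    (hA : A = fromBlocks 1 (fromCols b' (Matrix.of fun _ _ => b)) 0
      (fromBlocks B b'' 0 1))
    (v : Matrix (Fin 1 ⊕ (Fin m ⊕ Fin 1)) (Fin 1) F)
    (hv : v = Matrix.of fun p _ =>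
      if p = Sum.inr (Sum.inr 0) then algebraMap K F lam else 0)
    (Binv : Matrix (Fin 1 ⊕ (Fin m ⊕ Fin 1)) (Fin 1 ⊕ (Fin m ⊕ Fin 1)) F)
    (hAB : A * Binv = 1) (hBA : Binv * A = 1)
    (hf : f = (Binv * v) (Sum.inl 0) 0)
    (hleft : LinearIndependent K fun p => (Binv * v) p 0)
    (hright : LinearIndependent K fun q => Binv (Sum.inl 0) q) :
    let S : Matrix (Fin m) (Fin m) F := revMat F m
    let A' : Matrix (Fin m ⊕ Fin 1) (Fin 1 ⊕ Fin m) F :=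
      fromBlocks (-(algebraMap K F lam • (S * b''))) (-(S * B * S))
        (Matrix.of fun _ _ => -(algebraMap K F lam * b)) (-(b' * S))
    let v' : Matrix (Fin m ⊕ Fin 1) (Fin 1) F :=
      Matrix.of fun p _ => if p = Sum.inr 0 then 1 else 0
    ∃ B' : Matrix (Fin 1 ⊕ Fin m) (Fin m ⊕ Fin 1) F,
      A' * B' = 1 ∧ B' * A' = 1 ∧
      (B' * v') (Sum.inl 0) 0 = f⁻¹ ∧
      (LinearIndependent K fun p => (B' * v') p 0) ∧
      (LinearIndependent K fun q => B' (Sum.inl 0) q) ∧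
      (1 : F) ∉ Submodule.span K (Set.range fun p => (B' * v') p 0) ∧
      (1 : F) ∉ Submodule.span K (Set.range fun q => B' (Sum.inl 0) q) := by
  intro S A' v'
  subst hA hv
  -- lam ≠ 0
  have hlam : lam ≠ 0 := by
    intro h0
    apply hne
    rw [hf]
    simp [Matrix.mul_apply, h0]
  -- block structure of Binv
  have hBinv : Binv = fromBlocks Binv.toBlocks₁₁ Binv.toBlocks₁₂ Binv.toBlocks₂₁
      Binv.toBlocks₂₂ := (fromBlocks_toBlocks Binv).symm
  set P := Binv.toBlocks₁₁ with hPdef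
  set Q := Binv.toBlocks₁₂ with hQdef
  set X := Binv.toBlocks₂₁ with hXdef
  set Z := Binv.toBlocks₂₂ with hZdef
  rw [hBinv, fromBlocks_multiply, ← fromBlocks_one, fromBlocks_inj] at hAB hBA
  obtain ⟨hAB11, hAB12, hAB21, hAB22⟩ := hAB
  obtain ⟨hBA11, hBA12, hBA21, hBA22⟩ := hBA
  simp only [Matrix.mul_one, Matrix.mul_zero, Matrix.zero_mul, Matrix.one_mul,
    add_zero, zero_add] at hAB11 hAB12 hAB21 hAB22 hBA11 hBA12 hBA21 hBA22
  -- hBA11 : P = 1, hBA21 : X = 0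
  have hX0 : X = 0 := hBA21
  have hP1 : P = 1 := hBA11
  rw [hX0, Matrix.zero_mul, zero_add] at hBA22
  rw [hP1, Matrix.one_mul] at hBA12
  -- hBA22 : Z * A22 = 1, hAB22 : A22 * Z = 1
  have hQA : Q * (fromBlocks B b'' 0 1 : Matrix (Fin m ⊕ Fin 1) (Fin m ⊕ Fin 1) F) =
      -(fromCols b' (Matrix.of fun _ _ => b)) := by
    rw [eq_neg_iff_add_eq_zero, add_comm]; exact hBA12
  -- blocks of Z
  have hZblocks : Z = fromBlocks Z.toBlocks₁₁ Z.toBlocks₁₂ Z.toBlocks₂₁ Z.toBlocks₂₂ :=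
    (fromBlocks_toBlocks Z).symm
  set C := Z.toBlocks₁₁ with hCdef
  set y := Z.toBlocks₁₂ with hydef
  set W := Z.toBlocks₂₁ with hWdef
  set U := Z.toBlocks₂₂ with hUdef
  rw [hZblocks, fromBlocks_multiply, ← fromBlocks_one, fromBlocks_inj] at hBA22 hAB22
  obtain ⟨hz11, hz12, hz21, hz22⟩ := hBA22
  obtain ⟨ha11, ha12, ha21, ha22⟩ := hAB22
  simp only [Matrix.mul_one, Matrix.mul_zero, Matrix.zero_mul, Matrix.one_mul,
    add_zero, zero_add] at hz11 hz12 hz21 hz22 ha11 ha12 ha21 ha22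
  -- ha21 : W = 0, ha22 : U = 1
  have hW0 : W = 0 := ha21
  have hU1 : U = 1 := ha22
  rw [hW0, Matrix.mul_zero, add_zero] at ha11
  rw [hU1, Matrix.mul_one] at ha12
  -- now: hz11 : C * B = 1, hz12 : C * b'' + y = 0, ha11 : B * C = 1, ha12 : B * y + b'' = 0
  have hCB : C * B = 1 := hz11
  have hBC : B * C = 1 := ha11
  have hCb : C * b'' = -y := by rw [eq_neg_iff_add_eq_zero]; exact hz12
  have hBy : B * y = -b'' := by rw [eq_neg_iff_add_eq_zero]; exact ha12
  -- blocks of Q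
  set q := Q.toCols₁ with hqdef
  set rM := Q.toCols₂ with hrdef
  rw [← fromCols_toCols Q, fromCols_mul_fromBlocks, fromCols_neg,
    fromCols_ext_iff] at hQA
  obtain ⟨hq1, hq2⟩ := hQA
  simp only [Matrix.mul_zero, Matrix.mul_one, add_zero] at hq1 hq2
  have hqB : q * B = -b' := hq1
  have hqbr : q * b'' + rM = -(Matrix.of fun _ _ => b) := hq2
  have hbC : b' * C = -q := by
    have h : q * B * C = -b' * C := congrArg (fun M => M * C) hqB
    rw [Matrix.mul_assoc, hBC, Matrix.mul_one, Matrix.neg_mul] at h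
    exact (neg_eq_iff_eq_neg.mpr h).symm
  -- the scalar r and f
  set bM : Matrix (Fin 1) (Fin 1) F := Matrix.of fun _ _ => b with hbMdef
  have hrM : bM + q * b'' = -rM :=
    eq_neg_of_add_eq_zero_left (by rw [add_assoc, hqbr, add_neg_cancel])
  have hqb'' : q * b'' = -rM - bM := by
    rw [← hrM]; abel
  -- f in terms of rM
  have hsv : ∀ p, (Binv * ((Matrix.of fun p (_ : Fin 1) =>
      if p = Sum.inr (Sum.inr 0) then algebraMap K F lam else 0) :
      Matrix (Fin 1 ⊕ (Fin m ⊕ Fin 1)) (Fin 1) F)) p 0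
      = Binv p (Sum.inr (Sum.inr 0)) * algebraMap K F lam := by
    intro p
    simp [Matrix.mul_apply]
  have hfr : f = lam • rM 0 0 := by
    rw [hf, hsv, Algebra.smul_def]
    exact (Algebra.commutes lam _).symm
  have hscal : algebraMap K F lam * rM 0 0 = f := by
    rw [hfr, Algebra.smul_def]
  have hfg : f * f⁻¹ = 1 := mul_inv_cancel₀ hne
  have hgf : f⁻¹ * f = 1 := inv_mul_cancel₀ hne
  have hSS : S * S = 1 := revMat_mul_revMat (F := F) m
  -- collapse helpers
  have hSSX : ∀ {n : Type} (X : Matrix (Fin m) n F), S * (S * X) = X := by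
    intro n X; rw [← Matrix.mul_assoc, hSS, Matrix.one_mul]
  have hBCX : ∀ {n : Type} (X : Matrix (Fin m) n F), B * (C * X) = X := by
    intro n X; rw [← Matrix.mul_assoc, hBC, Matrix.one_mul]
  have hCBX : ∀ {n : Type} (X : Matrix (Fin m) n F), C * (B * X) = X := by
    intro n X; rw [← Matrix.mul_assoc, hCB, Matrix.one_mul]
  have hByX : ∀ {n : Type} (X : Matrix (Fin 1) n F), B * (y * X) = -(b'' * X) := by
    intro n X; rw [← Matrix.mul_assoc, hBy, Matrix.neg_mul]
  have hCbX : ∀ {n : Type} (X : Matrix (Fin 1) n F), C * (b'' * X) = -(y * X) := by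
    intro n X; rw [← Matrix.mul_assoc, hCb, Matrix.neg_mul]
  have hqBX : ∀ {n : Type} (X : Matrix (Fin m) n F), q * (B * X) = -(b' * X) := by
    intro n X; rw [← Matrix.mul_assoc, hqB, Matrix.neg_mul]
  have hbCX : ∀ {n : Type} (X : Matrix (Fin m) n F), b' * (C * X) = -(q * X) := by
    intro n X; rw [← Matrix.mul_assoc, hbC, Matrix.neg_mul]
  have hb'y : b' * y = q * b'' := by
    have h1 : b' * (C * b'') = b' * (-y) := by rw [hCb]
    rw [← Matrix.mul_assoc, hbC, Matrix.neg_mul, Matrix.mul_neg] at h1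
    have := neg_injective h1
    rw [← this]
  have hbyX : ∀ {n : Type} (X : Matrix (Fin 1) n F), b' * (y * X) = q * (b'' * X) := by
    intro n X; rw [← Matrix.mul_assoc, hb'y, Matrix.mul_assoc]
  have hqbX : ∀ {n : Type} (X : Matrix (Fin 1) n F),
      q * (b'' * X) = -(rM * X) - bM * X := by
    intro n X; rw [← Matrix.mul_assoc, hqb'', Matrix.sub_mul, Matrix.neg_mul]
  -- scalar collapses
  have hsc3 : ∀ x : F, lam • (x * (f⁻¹ * rM 0 0)) = x := by
    intro x
    rw [Algebra.smul_def, Algebra.commutes, mul_assoc, mul_assoc]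
    rw [← Algebra.commutes lam (rM 0 0), hscal, hgf, mul_one]
  have hcancel : ∀ {n₁ n₂ : Type} (X : Matrix n₁ n₂ F),
      lam • rM 0 0 • f⁻¹ • X = X := by
    intro n₁ n₂ X
    rw [smul_smul, ← smul_assoc]
    have : lam • (rM 0 0 * f⁻¹) = 1 := by
      rw [Algebra.smul_def, ← mul_assoc, hscal, hfg]
    rw [this, one_smul]
  have hgr1 : lam • f⁻¹ • rM = (1 : Matrix (Fin 1) (Fin 1) F) := by
    ext i j
    have hi : i = 0 := Subsingleton.elim i 0
    have hj : j = 0 := Subsingleton.elim j 0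
    subst hi; subst hj
    simp only [Matrix.smul_apply, Matrix.one_apply_eq, smul_eq_mul]
    simpa using hsc3 1
  have hXr' : ∀ {n : Type} (X : Matrix n (Fin m) F),
      lam • (X * (y * (f⁻¹ • rM))) = X * y := by
    intro n X
    ext i j
    have hj : j = 0 := Subsingleton.elim j 0
    subst hj
    rw [Matrix.smul_apply, Matrix.mul_apply, Matrix.mul_apply, Finset.smul_sum]
    apply Finset.sum_congr rfl
    intro k _
    have h1 : (y * (f⁻¹ • rM)) k 0 = y k 0 * (f⁻¹ * rM 0 0) := by
      simp [Matrix.mul_apply]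
    rw [h1, ← mul_assoc, hsc3]
  -- define B'
  set B'x : Matrix (Fin 1 ⊕ Fin m) (Fin m ⊕ Fin 1) F :=
    fromBlocks (f⁻¹ • (q * S)) (f⁻¹ • 1)
      (-(S * C * S) + lam • ((S * y) * (f⁻¹ • (q * S))))
      (lam • ((S * y) * (f⁻¹ • (1 : Matrix (Fin 1) (Fin 1) F)))) with hB'def
  have hA'eq : A' = fromBlocks (-(lam • (S * b''))) (-(S * B * S)) (-(lam • bM))
      (-(b' * S)) := by
    show fromBlocks (-(algebraMap K F lam • (S * b''))) (-(S * B * S))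
      (Matrix.of fun _ _ => -(algebraMap K F lam * b)) (-(b' * S)) = _
    rw [fromBlocks_inj]
    refine ⟨by rw [algebraMap_smul], rfl, ?_, rfl⟩
    ext i j
    simp only [Matrix.neg_apply, Matrix.smul_apply, of_apply, hbMdef]
    rw [Algebra.smul_def]
  -- entry facts about Binv
  have hU00 : Binv (Sum.inr (Sum.inr 0)) (Sum.inr (Sum.inr 0)) = 1 := by
    have h : U 0 0 = 1 := by rw [hU1]; exact Matrix.one_apply_eq 0
    exact h
  have hyB : ∀ j : Fin m, Binv (Sum.inr (Sum.inl j)) (Sum.inr (Sum.inr 0)) = y j 0 :=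
    fun j => rfl
  -- the abstract family of the original left family
  set ffam : (Fin 1 ⊕ (Fin m ⊕ Fin 1)) → F := fun p => (Binv *
      ((Matrix.of fun p (_ : Fin 1) =>
        if p = Sum.inr (Sum.inr 0) then algebraMap K F lam else 0) :
        Matrix (Fin 1 ⊕ (Fin m ⊕ Fin 1)) (Fin 1) F)) p 0 with hffam
  have hleft' : LinearIndependent K ffam := by rw [hffam]; exact hleft
  have hffl : ffam (Sum.inl 0) = f := hf.symm
  have hffU : ffam (Sum.inr (Sum.inr 0)) = algebraMap K F lam := by
    simp only [hffam]
    exact (hsv _).trans (by rw [hU00, one_mul])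
  have hffy : ∀ j : Fin m, ffam (Sum.inr (Sum.inl j)) = y j 0 * algebraMap K F lam := by
    intro j
    simp only [hffam]
    exact (hsv _).trans (by rw [hyB])
  -- values of the new left family
  have hv'e : ∀ (k : Fin m ⊕ Fin 1) (j : Fin 1), v' k j = if k = Sum.inr 0 then 1 else 0 :=
    fun k j => rfl
  have hv'col : ∀ p, (B'x * v') p 0 = B'x p (Sum.inr 0) := by
    intro p
    simp [Matrix.mul_apply, hv'e]
  have hSapp : ∀ (M : Matrix (Fin m) (Fin 1) F) (i : Fin m) (j : Fin 1),
      (S * M) i j = M i.rev j := fun M i j => revMat_mul_apply M i j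
  have hqSapp : ∀ (i : Fin 1) (j : Fin m), (q * S) i j = q i j.rev :=
    fun i j => mul_revMat_apply q i j
  have hB'val : ∀ p, B'x p (Sum.inr 0) = Sum.elim (fun _ : Fin 1 => f⁻¹)
      (fun i : Fin m => lam • (y i.rev 0 * f⁻¹)) p := by
    rintro (i | i)
    · rw [hB'def, fromBlocks_apply₁₂]
      have : i = 0 := Subsingleton.elim i 0
      subst this
      simp
    · rw [hB'def, fromBlocks_apply₂₂, Matrix.smul_apply]
      simp [Matrix.mul_apply, Matrix.one_apply, hSapp]
  have hB'row : ∀ k, B'x (Sum.inl 0) k = Sum.elim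
      (fun j : Fin m => f⁻¹ * Binv (Sum.inl 0) (Sum.inr (Sum.inl j.rev)))
      (fun _ : Fin 1 => f⁻¹ * Binv (Sum.inl 0) (Sum.inl 0)) k := by
    rintro (j | j)
    · rw [hB'def, fromBlocks_apply₁₁, Matrix.smul_apply, hqSapp]
      rfl
    · rw [hB'def, fromBlocks_apply₁₂, Matrix.smul_apply]
      have : j = 0 := Subsingleton.elim j 0
      subst this
      rw [show Binv (Sum.inl 0) (Sum.inl 0) = P 0 0 from rfl, hP1]
      simp
  -- linear equivalences
  set Er : F ≃ₗ[K] F := LinearEquiv.ofLinear (LinearMap.mulRight K f⁻¹)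
    (LinearMap.mulRight K f)
    (by ext x; simp [LinearMap.mulRight_apply, mul_assoc, hfg])
    (by ext x; simp [LinearMap.mulRight_apply, mul_assoc, hgf]) with hErdef
  set El : F ≃ₗ[K] F := LinearEquiv.ofLinear (LinearMap.mulLeft K f⁻¹)
    (LinearMap.mulLeft K f)
    (by ext x; simp [LinearMap.mulLeft_apply, ← mul_assoc, hgf])
    (by ext x; simp [LinearMap.mulLeft_apply, ← mul_assoc, hfg]) with hEldef
  set el : Fin 1 ⊕ Fin m → Fin 1 ⊕ (Fin m ⊕ Fin 1) :=
    Sum.elim (fun _ => Sum.inr (Sum.inr 0)) (fun i => Sum.inr (Sum.inl i.rev)) with heldef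
  have helinj : Function.Injective el := by
    rintro (a | a) (c | c) h
    · exact congrArg Sum.inl (Subsingleton.elim a c)
    · simp [heldef] at h
    · simp [heldef] at h
    · simp only [heldef, Sum.elim_inr, Sum.inr.injEq, Sum.inl.injEq] at h
      have h2 := congrArg Fin.rev h
      rw [Fin.rev_rev, Fin.rev_rev] at h2
      exact congrArg Sum.inr h2
  set er : Fin m ⊕ Fin 1 → Fin 1 ⊕ (Fin m ⊕ Fin 1) :=
    Sum.elim (fun j => Sum.inr (Sum.inl j.rev)) (fun _ => Sum.inl 0) with herdef
  have herinj : Function.Injective er := by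
    rintro (a | a) (c | c) h
    · simp only [herdef, Sum.elim_inl, Sum.inr.injEq, Sum.inl.injEq] at h
      have h2 := congrArg Fin.rev h
      rw [Fin.rev_rev, Fin.rev_rev] at h2
      exact congrArg Sum.inl h2
    · simp [herdef] at h
    · simp [herdef] at h
    · exact congrArg Sum.inr (Subsingleton.elim a c)
  set cu : Fin 1 ⊕ Fin m → Kˣ :=
    Sum.elim (fun _ => (Units.mk0 lam hlam)⁻¹) (fun _ => 1) with hcudef
  have hinvsmul : (lam⁻¹ : K) • algebraMap K F lam = 1 := by
    rw [Algebra.smul_def, ← _root_.map_mul, inv_mul_cancel₀ hlam, _root_.map_one]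
  have hfameq : (fun p => (B'x * v') p 0) = ⇑Er.toLinearMap ∘ (cu • (ffam ∘ el)) := by
    funext p
    rw [Function.comp_apply, Pi.smul_apply', Function.comp_apply, hv'col, hB'val]
    rcases p with i | i
    · simp only [Sum.elim_inl, hcudef, heldef, hffU, Units.smul_def,
        Units.val_inv_eq_inv_val, Units.val_mk0, hinvsmul]
      simp [hErdef]
    · simp only [Sum.elim_inr, hcudef, heldef, hffy, one_smul]
      simp only [hErdef, LinearEquiv.coe_coe, LinearEquiv.ofLinear_apply,
        LinearMap.mulRight_apply]
      rw [Algebra.smul_def, ← mul_assoc, Algebra.commutes]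
  have hfameq2 : (fun k => B'x (Sum.inl 0) k) =
      ⇑El.toLinearMap ∘ ((fun k => Binv (Sum.inl 0) k) ∘ er) := by
    funext k
    rw [Function.comp_apply, Function.comp_apply, hB'row]
    rcases k with j | j
    · simp [hEldef, herdef]
    · simp [hEldef, herdef]
  refine ⟨B'x, ?_, ?_, ?_, ?_, ?_, ?_, ?_⟩
  · -- A' * B' = 1
    rw [hA'eq, hB'def, fromBlocks_multiply, ← fromBlocks_one, fromBlocks_inj]
    refine ⟨?_, ?_, ?_, ?_⟩
    · simp only [Matrix.mul_add, Matrix.add_mul, Matrix.mul_sub, Matrix.sub_mul,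
        Matrix.neg_mul, Matrix.mul_neg, Matrix.smul_mul, Matrix.mul_smul, smul_neg,
        neg_neg, neg_add, Matrix.mul_assoc, hSSX, hBCX, hCBX, hByX, hCbX, hqBX, hbCX,
        hbyX, hqbX, hSS, hBC, hCB, hBy, hCb, hqB, hbC, hqb'', one_dim_mul, of_apply,
        smul_sub, sub_smul, neg_smul, Matrix.one_mul, Matrix.mul_one, one_smul,
        hcancel, hgr1, hXr', smul_add]
      abel
    · simp only [Matrix.mul_add, Matrix.add_mul, Matrix.mul_sub, Matrix.sub_mul,
        Matrix.neg_mul, Matrix.mul_neg, Matrix.smul_mul, Matrix.mul_smul, smul_neg,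
        neg_neg, neg_add, Matrix.mul_assoc, hSSX, hBCX, hCBX, hByX, hCbX, hqBX, hbCX,
        hbyX, hqbX, hSS, hBC, hCB, hBy, hCb, hqB, hbC, hqb'', one_dim_mul, of_apply,
        smul_sub, sub_smul, neg_smul, Matrix.one_mul, Matrix.mul_one, one_smul,
        hcancel, hgr1, hXr', smul_add]
      abel
    · simp only [Matrix.mul_add, Matrix.add_mul, Matrix.mul_sub, Matrix.sub_mul,
        Matrix.neg_mul, Matrix.mul_neg, Matrix.smul_mul, Matrix.mul_smul, smul_neg,
        neg_neg, neg_add, Matrix.mul_assoc, hSSX, hBCX, hCBX, hByX, hCbX, hqBX, hbCX,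
        hbyX, hqbX, hSS, hBC, hCB, hBy, hCb, hqB, hbC, hqb'', one_dim_mul, of_apply,
        smul_sub, sub_smul, neg_smul, Matrix.one_mul, Matrix.mul_one, one_smul,
        hcancel, hgr1, hXr', smul_add]
      abel
    · simp only [Matrix.mul_add, Matrix.add_mul, Matrix.mul_sub, Matrix.sub_mul,
        Matrix.neg_mul, Matrix.mul_neg, Matrix.smul_mul, Matrix.mul_smul, smul_neg,
        neg_neg, neg_add, Matrix.mul_assoc, hSSX, hBCX, hCBX, hByX, hCbX, hqBX, hbCX,
        hbyX, hqbX, hSS, hBC, hCB, hBy, hCb, hqB, hbC, hqb'', one_dim_mul, of_apply,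
        smul_sub, sub_smul, neg_smul, Matrix.one_mul, Matrix.mul_one, one_smul,
        hcancel, hgr1, hXr', smul_add]
      abel
  · -- B' * A' = 1
    rw [hA'eq, hB'def, fromBlocks_multiply, ← fromBlocks_one, fromBlocks_inj]
    refine ⟨?_, ?_, ?_, ?_⟩
    · simp only [Matrix.mul_add, Matrix.add_mul, Matrix.mul_sub, Matrix.sub_mul,
        Matrix.neg_mul, Matrix.mul_neg, Matrix.smul_mul, Matrix.mul_smul, smul_neg,
        neg_neg, neg_add, Matrix.mul_assoc, hSSX, hBCX, hCBX, hByX, hCbX, hqBX, hbCX,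
        hbyX, hqbX, hSS, hBC, hCB, hBy, hCb, hqB, hbC, hqb'', one_dim_mul, of_apply,
        smul_sub, sub_smul, neg_smul, Matrix.one_mul, Matrix.mul_one, one_smul,
        hcancel, hgr1, hXr', smul_add]
      abel
    · simp only [Matrix.mul_add, Matrix.add_mul, Matrix.mul_sub, Matrix.sub_mul,
        Matrix.neg_mul, Matrix.mul_neg, Matrix.smul_mul, Matrix.mul_smul, smul_neg,
        neg_neg, neg_add, Matrix.mul_assoc, hSSX, hBCX, hCBX, hByX, hCbX, hqBX, hbCX,
        hbyX, hqbX, hSS, hBC, hCB, hBy, hCb, hqB, hbC, hqb'', one_dim_mul, of_apply,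
        smul_sub, sub_smul, neg_smul, Matrix.one_mul, Matrix.mul_one, one_smul,
        hcancel, hgr1, hXr', smul_add]
      abel
    · simp only [Matrix.mul_add, Matrix.add_mul, Matrix.mul_sub, Matrix.sub_mul,
        Matrix.neg_mul, Matrix.mul_neg, Matrix.smul_mul, Matrix.mul_smul, smul_neg,
        neg_neg, neg_add, Matrix.mul_assoc, hSSX, hBCX, hCBX, hByX, hCbX, hqBX, hbCX,
        hbyX, hqbX, hSS, hBC, hCB, hBy, hCb, hqB, hbC, hqb'', one_dim_mul, of_apply,
        smul_sub, sub_smul, neg_smul, Matrix.one_mul, Matrix.mul_one, one_smul,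
        hcancel, hgr1, hXr', smul_add]
      abel
    · simp only [Matrix.mul_add, Matrix.add_mul, Matrix.mul_sub, Matrix.sub_mul,
        Matrix.neg_mul, Matrix.mul_neg, Matrix.smul_mul, Matrix.mul_smul, smul_neg,
        neg_neg, neg_add, Matrix.mul_assoc, hSSX, hBCX, hCBX, hByX, hCbX, hqBX, hbCX,
        hbyX, hqbX, hSS, hBC, hCB, hBy, hCb, hqB, hbC, hqb'', one_dim_mul, of_apply,
        smul_sub, sub_smul, neg_smul, Matrix.one_mul, Matrix.mul_one, one_smul,
        hcancel, hgr1, hXr', smul_add]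
      abel
  · -- value is f⁻¹
    rw [hv'col, hB'val]
    simp
  · -- left family linearly independent
    rw [hfameq]
    exact ((hleft'.comp el helinj).units_smul cu).map' Er.toLinearMap Er.ker
  · -- right family linearly independent
    rw [hfameq2]
    exact ((hright.comp er herinj).map' El.toLinearMap El.ker)
  · -- 1 not in left span
    intro hmem
    rw [hfameq, Set.range_comp, ← Submodule.map_span, Submodule.mem_map_equiv] at hmem
    have hsymm : Er.symm (1 : F) = f := by
      simp [hErdef]
    rw [hsymm] at hmem
    have hsub : Submodule.span K (Set.range (cu • (ffam ∘ el))) ≤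
        Submodule.span K (ffam '' Set.range el) := by
      rw [Submodule.span_le]
      rintro x ⟨p, rfl⟩
      rw [Pi.smul_apply', Units.smul_def]
      exact Submodule.smul_mem _ _
        (Submodule.subset_span ⟨el p, Set.mem_range_self p, rfl⟩)
    have hnot : Sum.inl 0 ∉ Set.range el := by
      rintro ⟨p | p, hp⟩ <;> simp [heldef] at hp
    exact hleft'.notMem_span_image hnot (hffl ▸ hsub hmem)
  · -- 1 not in right span
    intro hmem
    rw [hfameq2] at hmem
    simp only [Set.range_comp] at hmem
    rw [← Submodule.map_span, Submodule.mem_map_equiv] at hmem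
    have hsymm : El.symm (1 : F) = f := by
      simp [hEldef]
    rw [hsymm] at hmem
    have hr' : Binv (Sum.inl 0) (Sum.inr (Sum.inr 0)) ∈ Submodule.span K
        ((fun k => Binv (Sum.inl 0) k) '' Set.range er) := by
      have heq : Binv (Sum.inl 0) (Sum.inr (Sum.inr 0)) = lam⁻¹ • f := by
        rw [hfr, inv_smul_smul₀ hlam]
        rfl
      rw [heq]
      exact Submodule.smul_mem _ _ hmem
    have hnot2 : Sum.inr (Sum.inr 0) ∉ Set.range er := by
      rintro ⟨p | p, hp⟩ <;> simp [herdef] at hp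
    exact hright.notMem_span_image hnot2 hr'
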